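/- For any integer β ≥ 2, the sum ∑_{r=1}^{β-1} 1/(4 sin²(πr/β)) equals (β² − 1)/12. -/

import Mathlib

open Finset Complex

lemma aux_telescope (x : ℂ) (n : ℕ) :
    (x - 1) * ∑ k ∈ range n, (k : ℂ) * x ^ k
      = ((n : ℂ) - 1) * x ^ n - ∑ k ∈ range n, x ^ k + 1 := by
  induction n with
  | zero => simp
  | succ m ih =>
    rw [sum_range_succ, sum_range_succ, mul_add, ih]
    push_cast
    ring

lemma aux_inv (n : ℕ) (x : ℂ) (hx : x ^ n = 1) (hx1 : x ≠ 1) :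
    (x - 1) * ∑ k ∈ range n, (k : ℂ) * x ^ k = n := by
  have hg : ∑ k ∈ range n, x ^ k = 0 := by
    rw [geom_sum_eq hx1, hx, sub_self, zero_div]
  rw [aux_telescope, hg, hx]; ring

lemma sum_id_real (n : ℕ) : (∑ k ∈ range n, (k : ℝ)) = ((n:ℝ)^2 - n)/2 := by
  induction n with
  | zero => simp
  | succ m ih => rw [sum_range_succ, ih]; push_cast; ring

lemma sum_sq_real (n : ℕ) : (∑ k ∈ range n, (k : ℝ)^2) = (2*(n:ℝ)^3 - 3*(n:ℝ)^2 + n)/6 := by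
  induction n with
  | zero => simp
  | succ m ih => rw [sum_range_succ, ih]; push_cast; ring

theorem stmt_2 (β : ℕ) (hβ : 2 ≤ β) :
    ∑ r ∈ Finset.Icc 1 (β - 1), 1 / (4 * Real.sin (Real.pi * r / β) ^ 2) =
      ((β : ℝ) ^ 2 - 1) / 12 := by
  have hn0 : (β:ℝ) ≠ 0 := by positivity
  have hnne : β ≠ 0 := by omega
  set ζ : ℂ := Complex.exp (2 * Real.pi * Complex.I / β) with hζdef
  have hζ : IsPrimitiveRoot ζ β := Complex.isPrimitiveRoot_exp β hnne
  have hζn : ζ ^ β = 1 := hζ.pow_eq_one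
  have hζ0 : ζ ≠ 0 := Complex.exp_ne_zero _
  have hconj : (starRingEnd ℂ) ζ = ζ⁻¹ := by
    rw [hζdef, ← Complex.exp_conj, ← Complex.exp_neg]
    congr 1
    simp [map_div₀, Complex.conj_I, map_ofNat]
    ring
  set S : ℕ → ℂ := fun r => ∑ k ∈ range β, (k : ℂ) * (ζ ^ r) ^ k with hSdef
  -- key equation per r
  have hkey : ∀ r, 1 ≤ r → r < β → (ζ ^ r - 1) * S r = β := by
    intro r hr1 hrn
    exact aux_inv β (ζ ^ r) (by rw [← pow_mul, mul_comm, pow_mul, hζn, one_pow])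
      (hζ.pow_ne_one_of_pos_of_lt (by omega) hrn)
  -- step A : normSq (ζ^r - 1) = 4 sin^2
  have hA : ∀ r : ℕ, 1 ≤ r → r < β →
      Complex.normSq (ζ ^ r - 1) = 4 * Real.sin (Real.pi * r / β) ^ 2 := by
    intro r hr1 hrn
    have h1 : ζ ^ r = Complex.exp ((2 * Real.pi * r / β : ℝ) * Complex.I) := by
      rw [hζdef, ← Complex.exp_nat_mul]
      congr 1
      push_cast
      field_simp
    set θ : ℝ := 2 * Real.pi * r / β with hθ
    have h2 : Complex.exp ((θ:ℝ) * Complex.I) - 1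
        = ((Real.cos θ - 1 : ℝ) : ℂ) + ((Real.sin θ : ℝ) : ℂ) * Complex.I := by
      rw [Complex.exp_mul_I, ← Complex.ofReal_cos, ← Complex.ofReal_sin]
      push_cast
      ring
    rw [h1, h2, Complex.normSq_add_mul_I]
    have h3 : θ = 2 * (Real.pi * r / β) := by rw [hθ]; ring
    rw [h3, Real.cos_two_mul, Real.sin_two_mul]
    nlinarith [Real.sin_sq_add_cos_sq (Real.pi * r / β)]
  -- per-term formula
  have hterm : ∀ r ∈ Finset.Icc 1 (β - 1),
      1 / (4 * Real.sin (Real.pi * r / β) ^ 2) = Complex.normSq (S r) / (β:ℝ)^2 := by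
    intro r hr
    simp only [mem_Icc] at hr
    have hr1 : 1 ≤ r := hr.1
    have hrn : r < β := by omega
    have h1 := hkey r hr1 hrn
    have h2 : Complex.normSq (ζ ^ r - 1) * Complex.normSq (S r) = (β:ℝ)^2 := by
      have := congrArg Complex.normSq h1
      rw [map_mul] at this
      rw [this]
      simp [Complex.normSq_natCast]
      ring
    have h3 := hA r hr1 hrn
    have hs : Real.sin (Real.pi * r / β) ≠ 0 := by
      have hp : 0 < Real.pi * r / β := by
        have : (0:ℝ) < r := by exact_mod_cast hr1
        positivity
      have hlt : Real.pi * r / β < Real.pi := by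
        rw [div_lt_iff₀ (by positivity)]
        have : (r:ℝ) < β := by exact_mod_cast hrn
        nlinarith [Real.pi_pos]
      exact ne_of_gt (Real.sin_pos_of_pos_of_lt_pi hp hlt)
    rw [h3] at h2
    have h4 : 4 * Real.sin (Real.pi * r / β) ^ 2 ≠ 0 := by positivity
    field_simp
    linarith [h2]
  rw [Finset.sum_congr rfl hterm]
  -- orthogonality
  have horth : ∀ k ∈ range β, ∀ l ∈ range β,
      ∑ r ∈ range β, (ζ ^ k * (ζ⁻¹) ^ l) ^ r = if k = l then (β:ℂ) else 0 := by
    intro k hk l hl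
    simp only [mem_range] at hk hl
    by_cases hkl : k = l
    · subst hkl
      rw [if_pos rfl]
      have h1 : ζ ^ k * (ζ⁻¹) ^ k = 1 := by
        rw [inv_pow, mul_inv_cancel₀ (pow_ne_zero _ hζ0)]
      simp only [h1, one_pow, Finset.sum_const, Finset.card_range, nsmul_eq_mul, mul_one]
    · rw [if_neg hkl]
      have hx1 : ζ ^ k * (ζ⁻¹) ^ l ≠ 1 := by
        intro h
        apply hkl
        have : ζ ^ k = ζ ^ l := by
          rw [inv_pow, ← div_eq_mul_inv, div_eq_one_iff_eq (pow_ne_zero _ hζ0)] at h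
          exact h
        exact hζ.pow_inj hk hl this
      have hxn : (ζ ^ k * (ζ⁻¹) ^ l) ^ β = 1 := by
        rw [mul_pow, ← pow_mul, ← pow_mul, mul_comm k β, mul_comm l β, pow_mul, pow_mul,
          hζn, inv_pow, hζn]
        simp
      rw [geom_sum_eq hx1, hxn, sub_self, zero_div]
  -- total sum over range β
  have hT : (∑ r ∈ range β, Complex.normSq (S r)) = β * ∑ k ∈ range β, (k:ℝ)^2 := by
    have hC : ((∑ r ∈ range β, Complex.normSq (S r) : ℝ) : ℂ)
        = (β:ℂ) * ∑ k ∈ range β, (k:ℂ)^2 := by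
      push_cast
      have e1 : ∀ r, ((Complex.normSq (S r) : ℝ) : ℂ) = S r * (starRingEnd ℂ) (S r) :=
        fun r => (Complex.mul_conj _).symm
      calc ∑ r ∈ range β, ((Complex.normSq (S r) : ℝ) : ℂ)
          = ∑ r ∈ range β, ∑ k ∈ range β, ∑ l ∈ range β,
              ((k:ℂ) * (l:ℂ)) * (ζ ^ k * (ζ⁻¹) ^ l) ^ r := by
            refine Finset.sum_congr rfl fun r _ => ?_
            rw [e1, hSdef]
            simp only
            rw [map_sum, Finset.sum_mul_sum]
            refine Finset.sum_congr rfl fun k _ => Finset.sum_congr rfl fun l _ => ?_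
            rw [map_mul, map_pow, map_pow, hconj, Complex.conj_natCast]
            rw [mul_pow, ← pow_mul, ← pow_mul, mul_comm r k, mul_comm r l]
            ring
        _ = ∑ k ∈ range β, ∑ l ∈ range β, ((k:ℂ) * (l:ℂ)) *
              ∑ r ∈ range β, (ζ ^ k * (ζ⁻¹) ^ l) ^ r := by
            rw [Finset.sum_comm]
            refine Finset.sum_congr rfl fun k _ => ?_
            rw [Finset.sum_comm]
            refine Finset.sum_congr rfl fun l _ => ?_
            rw [Finset.mul_sum]
        _ = (β:ℂ) * ∑ k ∈ range β, (k:ℂ)^2 := by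
            rw [Finset.mul_sum]
            refine Finset.sum_congr rfl fun k hk => ?_
            rw [Finset.sum_congr rfl fun l hl => by rw [horth k hk l hl]]
            simp only [mul_ite, mul_zero]
            rw [Finset.sum_ite_eq (range β) k (fun l => (k:ℂ) * (l:ℂ) * β)]
            rw [if_pos hk]
            ring
    have := hC
    push_cast at this
    exact_mod_cast this
  -- value at r = 0
  have hS0 : Complex.normSq (S 0) = (∑ k ∈ range β, (k:ℝ))^2 := by
    have : S 0 = ((∑ k ∈ range β, (k:ℝ) : ℝ) : ℂ) := by
      rw [hSdef]
      push_cast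
      simp
    rw [this, Complex.normSq_ofReal]
    ring
  -- reduce Icc sum to range sum minus r = 0
  have hset : Finset.Icc 1 (β - 1) = (range β).erase 0 := by
    ext a
    simp only [mem_Icc, mem_erase, mem_range]
    omega
  rw [hset, Finset.sum_erase_eq_sub (by simp [mem_range]; omega : (0:ℕ) ∈ range β)]
  rw [← Finset.sum_div, hT, hS0, sum_id_real, sum_sq_real]
  field_simp
  ring
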